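/- Let p ∈ (0, 1) and R ∈ (1 − p, 1) be real numbers, and for each n set k_n := ⌈R n⌉. Then lim_{n→∞} Σ_{ñ=0}^{n} ε_d(k_n, ñ) · C(n, ñ) · (1 − p)^ñ p^{n−ñ} = 1. In other words, above the erasure-channel capacity 1 − p, the average rank-deficiency probability ⟨ε_d⟩ of a random code of rate R tends to 1. -/

import Mathlib

/-- The rank-deficiency probability `ε_d(k, ñ) = 1 - ∏_{i=0}^{k-1} (1 - 2^{i-ñ})` of a
uniformly random `k × ñ` matrix over `𝔽₂`. -/
noncomputable def epsDef (k ntilde : ℕ) : ℝ :=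
  1 - ∏ i ∈ Finset.range k, (1 - (2 : ℝ) ^ ((i : ℤ) - (ntilde : ℤ)))

lemma epsDef_eq_one {k ν : ℕ} (h : ν < k) : epsDef k ν = 1 := by
  unfold epsDef
  rw [Finset.prod_eq_zero (Finset.mem_range.mpr h)]
  · ring
  · simp

lemma epsDef_nonneg (k ν : ℕ) : 0 ≤ epsDef k ν := by
  unfold epsDef
  rcases lt_or_ge ν k with h | h
  · rw [Finset.prod_eq_zero (Finset.mem_range.mpr h)] <;> simp
  · have : ∏ i ∈ Finset.range k, (1 - (2:ℝ) ^ ((i:ℤ) - (ν:ℤ))) ≤ 1 := by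
      apply Finset.prod_le_one
      · intro i hi
        have hiν : (i:ℤ) - ν < 0 := by
          have : i < ν := lt_of_lt_of_le (Finset.mem_range.mp hi) h
          omega
        have : (2:ℝ) ^ ((i:ℤ) - (ν:ℤ)) < 1 := zpow_lt_one_of_neg₀ one_lt_two hiν
        linarith
      · intro i hi
        have : (0:ℝ) < (2:ℝ) ^ ((i:ℤ) - (ν:ℤ)) := zpow_pos two_pos _
        linarith
    linarith

lemma epsDef_le_one (k ν : ℕ) : epsDef k ν ≤ 1 := by
  unfold epsDef
  rcases lt_or_ge ν k with h | h
  · rw [Finset.prod_eq_zero (Finset.mem_range.mpr h)] <;> simp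
  · have : (0:ℝ) ≤ ∏ i ∈ Finset.range k, (1 - (2:ℝ) ^ ((i:ℤ) - (ν:ℤ))) := by
      apply Finset.prod_nonneg
      intro i hi
      have hiν : (i:ℤ) - ν < 0 := by
        have : i < ν := lt_of_lt_of_le (Finset.mem_range.mp hi) h
        omega
      have : (2:ℝ) ^ ((i:ℤ) - (ν:ℤ)) < 1 := zpow_lt_one_of_neg₀ one_lt_two hiν
      linarith
    linarith

lemma binom_sum (x : ℝ) (n : ℕ) :
    ∑ ν ∈ Finset.range (n + 1), (n.choose ν : ℝ) * x ^ ν * (1 - x) ^ (n - ν) = 1 := by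
  have := add_pow x (1 - x) n
  simp only [add_sub_cancel, one_pow] at this
  rw [show ∑ ν ∈ Finset.range (n + 1), (n.choose ν : ℝ) * x ^ ν * (1 - x) ^ (n - ν)
      = ∑ m ∈ Finset.range (n + 1), x ^ m * (1 - x) ^ (n - m) * (n.choose m : ℝ) from
    Finset.sum_congr rfl fun ν _ => by ring, ← this]

lemma binom_var (x : ℝ) (n : ℕ) :
    ∑ ν ∈ Finset.range (n + 1),
      ((n:ℝ) * x - ν) ^ 2 * ((n.choose ν : ℝ) * x ^ ν * (1 - x) ^ (n - ν))
      = n * x * (1 - x) := by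
  have := bernsteinPolynomial.variance ℝ n
  apply_fun fun q => Polynomial.aeval x q at this
  simp only [map_sum, map_mul, map_pow, map_sub, map_nsmul, Polynomial.aeval_X,
    Polynomial.aeval_natCast, bernsteinPolynomial, map_one, nsmul_eq_mul] at this
  exact this

/-- Above the erasure-channel capacity `1 - p`, the average rank-deficiency probability
`⟨ε_d⟩ = Σ_{ñ=0}^{n} ε_d(⌈Rn⌉, ñ) C(n, ñ) (1-p)^ñ p^{n-ñ}` of a random code of rate `R`
tends to `1` as `n → ∞`. -/
theorem average_rank_deficiency_above_capacity
    (p R : ℝ) (hp0 : 0 < p) (hp1 : p < 1) (hRcap : 1 - p < R) (hR1 : R < 1) :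
    Filter.Tendsto
      (fun n : ℕ =>
        ∑ ntilde ∈ Finset.range (n + 1),
          epsDef ⌈R * (n : ℝ)⌉₊ ntilde * (n.choose ntilde : ℝ) *
            (1 - p) ^ ntilde * p ^ (n - ntilde))
      Filter.atTop (nhds 1) := by
  set x : ℝ := 1 - p with hx
  have hp' : 1 - x = p := by rw [hx]; ring
  have hx0 : 0 < x := by rw [hx]; linarith
  set δ : ℝ := R - x with hδdef
  have hδ : 0 < δ := by rw [hδdef, hx]; linarith
  set S : ℕ → ℝ := fun n =>
    ∑ ntilde ∈ Finset.range (n + 1),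
      epsDef ⌈R * (n : ℝ)⌉₊ ntilde * (n.choose ntilde : ℝ) *
        x ^ ntilde * p ^ (n - ntilde) with hS
  have hupper : ∀ n : ℕ, S n ≤ 1 := by
    intro n
    rw [hS]
    have h1 := binom_sum x n
    rw [hp'] at h1
    rw [← h1]
    apply Finset.sum_le_sum
    intro ν _
    have hB : 0 ≤ (n.choose ν : ℝ) * x ^ ν * p ^ (n - ν) := by positivity
    calc epsDef ⌈R * (n : ℝ)⌉₊ ν * (n.choose ν : ℝ) * x ^ ν * p ^ (n - ν)
        = epsDef ⌈R * (n : ℝ)⌉₊ ν * ((n.choose ν : ℝ) * x ^ ν * p ^ (n - ν)) := by ring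
      _ ≤ 1 * ((n.choose ν : ℝ) * x ^ ν * p ^ (n - ν)) :=
          mul_le_mul_of_nonneg_right (epsDef_le_one _ _) hB
      _ = (n.choose ν : ℝ) * x ^ ν * p ^ (n - ν) := one_mul _
  have hlower : ∀ n : ℕ, 1 ≤ n → 1 - x * p / δ ^ 2 * (1 / (n : ℝ)) ≤ S n := by
    intro n hn
    have hn0 : (0 : ℝ) < n := by exact_mod_cast hn
    set k := ⌈R * (n : ℝ)⌉₊ with hk
    set B : ℕ → ℝ := fun ν => (n.choose ν : ℝ) * x ^ ν * p ^ (n - ν) with hBdef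
    have hBn : ∀ ν, 0 ≤ B ν := fun ν => by rw [hBdef]; positivity
    have hB1 : ∑ ν ∈ Finset.range (n + 1), B ν = 1 := by
      have h1 := binom_sum x n
      rw [hp'] at h1
      exact h1
    -- tail bound
    have hT : ∑ ν ∈ Finset.range (n + 1), (if k ≤ ν then B ν else 0)
        ≤ x * p / δ ^ 2 * (1 / (n : ℝ)) := by
      have hvar := binom_var x n
      rw [hp'] at hvar
      calc ∑ ν ∈ Finset.range (n + 1), (if k ≤ ν then B ν else 0)
          ≤ ∑ ν ∈ Finset.range (n + 1),
              ((n : ℝ) * x - ν) ^ 2 / (δ ^ 2 * (n : ℝ) ^ 2) * B ν := by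
            apply Finset.sum_le_sum
            intro ν _
            by_cases hν : k ≤ ν
            · rw [if_pos hν]
              have h1 : R * (n : ℝ) ≤ (ν : ℝ) := by
                calc R * (n : ℝ) ≤ (k : ℝ) := Nat.le_ceil _
                  _ ≤ (ν : ℝ) := by exact_mod_cast hν
              have h2 : δ * n ≤ (ν : ℝ) - n * x := by
                rw [hδdef]; nlinarith
              have hδn : (0:ℝ) ≤ δ * n := by positivity
              have h3 : (δ * n) ^ 2 ≤ ((n : ℝ) * x - ν) ^ 2 := by
                nlinarith [mul_self_le_mul_self hδn h2]
              have h4 : (1 : ℝ) ≤ ((n : ℝ) * x - ν) ^ 2 / (δ ^ 2 * (n : ℝ) ^ 2) := by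
                rw [le_div_iff₀ (by positivity)]
                nlinarith
              nlinarith [hBn ν, mul_le_mul_of_nonneg_right h4 (hBn ν)]
            · rw [if_neg hν]
              positivity
        _ = (1 / (δ ^ 2 * (n : ℝ) ^ 2)) *
              ∑ ν ∈ Finset.range (n + 1), ((n : ℝ) * x - ν) ^ 2 * B ν := by
            rw [Finset.mul_sum]
            exact Finset.sum_congr rfl fun ν _ => by ring
        _ = (1 / (δ ^ 2 * (n : ℝ) ^ 2)) * ((n : ℝ) * x * p) := by rw [hvar]
        _ = x * p / δ ^ 2 * (1 / (n : ℝ)) := by field_simp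
    have hterm : ∀ ν ∈ Finset.range (n + 1),
        B ν - (if k ≤ ν then B ν else 0)
          ≤ epsDef k ν * (n.choose ν : ℝ) * x ^ ν * p ^ (n - ν) := by
      intro ν _
      by_cases hν : k ≤ ν
      · rw [if_pos hν]
        have : (0:ℝ) ≤ epsDef k ν * ((n.choose ν : ℝ) * x ^ ν * p ^ (n - ν)) :=
          mul_nonneg (epsDef_nonneg _ _) (hBn ν)
        nlinarith [this]
      · rw [if_neg hν, epsDef_eq_one (lt_of_not_ge hν), one_mul, sub_zero]
    calc 1 - x * p / δ ^ 2 * (1 / (n : ℝ))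
        ≤ 1 - ∑ ν ∈ Finset.range (n + 1), (if k ≤ ν then B ν else 0) := by linarith [hT]
      _ = ∑ ν ∈ Finset.range (n + 1), (B ν - (if k ≤ ν then B ν else 0)) := by
          rw [Finset.sum_sub_distrib, hB1]
      _ ≤ S n := by
          rw [hS]
          exact Finset.sum_le_sum hterm
  have hlim : Filter.Tendsto (fun n : ℕ => 1 - x * p / δ ^ 2 * (1 / (n : ℝ)))
      Filter.atTop (nhds 1) := by
    have h0 := tendsto_one_div_atTop_nhds_zero_nat (𝕜 := ℝ)
    have := Filter.Tendsto.sub (tendsto_const_nhds (x := (1:ℝ)))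
      (Filter.Tendsto.const_mul (x * p / δ ^ 2) h0)
    simpa using this
  have := tendsto_of_tendsto_of_tendsto_of_le_of_le' hlim tendsto_const_nhds
    (Filter.eventually_atTop.mpr ⟨1, hlower⟩)
    (Filter.Eventually.of_forall hupper)
  exact this
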